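/- Let d = 2 or d = 3 and let m, l > 0. Let u : ℝ^d → ℂ be a Schwartz function with ∫_{ℝ^d} |u|² dx = m and L(u) = l. Assume either (a) l/m ∉ ℤ, or (b) l/m = n ∈ ℤ but u is not an eigenfunction of L_z with eigenvalue n (i.e. L_z u ≠ n u). Then u is regular, i.e. u and L_z u are linearly independent over ℝ: if λ₁, λ₂ ∈ ℝ satisfy λ₁ u + λ₂ L_z u = 0 identically on ℝ^d, then λ₁ = λ₂ = 0. -/

import Mathlib

open MeasureTheory Real Complex Filter

noncomputable section

/-- Angular momentum operator `L_z u = -i (x₁ ∂₂ u - x₂ ∂₁ u)`. -/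
def Lz {d : ℕ} (u : EuclideanSpace ℝ (Fin d) → ℂ) (x : EuclideanSpace ℝ (Fin d)) : ℂ :=
  if h : 1 < d then
    -Complex.I * (((x ⟨0, by omega⟩ : ℝ) : ℂ) * fderiv ℝ u x (EuclideanSpace.single ⟨1, h⟩ 1)
      - ((x ⟨1, h⟩ : ℝ) : ℂ) * fderiv ℝ u x (EuclideanSpace.single ⟨0, by omega⟩ 1))
  else 0

/-- Angular momentum `L(u) = ∫ (L_z u) ū`. -/
def angMom {d : ℕ} (u : EuclideanSpace ℝ (Fin d) → ℂ) : ℂ :=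
  ∫ x, Lz u x * (starRingEnd ℂ) (u x)

/-- Any real eigenvalue of `L_z` on a nonvanishing Schwartz eigenfunction is an integer. -/
lemma eigen_is_int {d : ℕ} (hd : 1 < d)
    (u : SchwartzMap (EuclideanSpace ℝ (Fin d)) ℂ) (c : ℝ)
    (heig : ∀ x, Lz (⇑u) x = ((c : ℝ) : ℂ) * u x)
    (x₀ : EuclideanSpace ℝ (Fin d)) (hx₀ : u x₀ ≠ 0) :
    ∃ n : ℤ, c = (n : ℝ) := by
  have hd0 : 0 < d := by omega
  set i0 : Fin d := ⟨0, hd0⟩ with hi0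
  set i1 : Fin d := ⟨1, hd⟩ with hi1
  have hi01 : i0 ≠ i1 := by simp [hi0, hi1, Fin.ext_iff]
  set a : ℝ := x₀ i0 with ha
  set b : ℝ := x₀ i1 with hb
  set e0 : EuclideanSpace ℝ (Fin d) := EuclideanSpace.single i0 1 with he0
  set e1 : EuclideanSpace ℝ (Fin d) := EuclideanSpace.single i1 1 with he1
  set r : EuclideanSpace ℝ (Fin d) := x₀ - a • e0 - b • e1 with hr
  set φ : ℝ → EuclideanSpace ℝ (Fin d) :=
    fun θ => (a * Real.cos θ - b * Real.sin θ) • e0 +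
      ((a * Real.sin θ + b * Real.cos θ) • e1 + r) with hφ
  have hφc0 : ∀ θ, φ θ i0 = a * Real.cos θ - b * Real.sin θ := by
    intro θ
    simp [hφ, hr, he0, he1, PiLp.add_apply, PiLp.sub_apply, PiLp.smul_apply,
      EuclideanSpace.single_apply, hi01, hi01.symm, ← ha]
  have hφc1 : ∀ θ, φ θ i1 = a * Real.sin θ + b * Real.cos θ := by
    intro θ
    simp [hφ, hr, he0, he1, PiLp.add_apply, PiLp.sub_apply, PiLp.smul_apply,
      EuclideanSpace.single_apply, hi01, hi01.symm, ← hb]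
  have hφ0 : φ 0 = x₀ := by
    simp only [hφ, Real.cos_zero, Real.sin_zero, mul_one, mul_zero, sub_zero, zero_add, hr]
    module
  have hφ2π : φ (2 * π) = x₀ := by
    simp only [hφ, Real.cos_two_pi, Real.sin_two_pi, mul_one, mul_zero, sub_zero, zero_add, hr]
    module
  have hudiff := u.differentiable
  -- derivative of u ∘ φ
  have key : ∀ θ : ℝ, HasDerivAt (fun θ => u (φ θ))
      (Complex.I * c * u (φ θ)) θ := by
    intro θ
    have h1 : HasDerivAt (fun θ => a * Real.cos θ - b * Real.sin θ)
        (-(a * Real.sin θ) - b * Real.cos θ) θ := by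
      simpa [mul_comm, Pi.sub_def] using
        (((Real.hasDerivAt_cos θ).const_mul a).sub ((Real.hasDerivAt_sin θ).const_mul b))
    have h2 : HasDerivAt (fun θ => a * Real.sin θ + b * Real.cos θ)
        (a * Real.cos θ - b * Real.sin θ) θ := by
      simpa [mul_comm, sub_eq_add_neg, Pi.add_def] using
        (((Real.hasDerivAt_sin θ).const_mul a).add ((Real.hasDerivAt_cos θ).const_mul b))
    have hφ' : HasDerivAt φ
        ((-(a * Real.sin θ) - b * Real.cos θ) • e0 +
          (a * Real.cos θ - b * Real.sin θ) • e1) θ := by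
      exact (h1.smul_const e0).add ((h2.smul_const e1).add_const r)
    have hcomp := ((hudiff (φ θ)).hasFDerivAt).comp_hasDerivAt θ hφ'
    have hval : (fderiv ℝ (⇑u) (φ θ))
        ((-(a * Real.sin θ) - b * Real.cos θ) • e0 +
          (a * Real.cos θ - b * Real.sin θ) • e1) = Complex.I * c * u (φ θ) := by
      have heq := heig (φ θ)
      rw [Lz, dif_pos hd] at heq
      have hD : (fderiv ℝ (⇑u) (φ θ))
          ((-(a * Real.sin θ) - b * Real.cos θ) • e0 +
            (a * Real.cos θ - b * Real.sin θ) • e1)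
          = ((-(a * Real.sin θ) - b * Real.cos θ : ℝ) : ℂ) * (fderiv ℝ (⇑u) (φ θ)) e0
            + ((a * Real.cos θ - b * Real.sin θ : ℝ) : ℂ) * (fderiv ℝ (⇑u) (φ θ)) e1 := by
        rw [map_add, _root_.map_smul, _root_.map_smul]
        simp [Complex.real_smul]
      rw [hD]
      have hy1 : ((φ θ : EuclideanSpace ℝ (Fin d)) i0 : ℂ) =
          ((a * Real.cos θ - b * Real.sin θ : ℝ) : ℂ) := by rw [hφc0]
      have hy2 : ((φ θ : EuclideanSpace ℝ (Fin d)) i1 : ℂ) =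
          ((a * Real.sin θ + b * Real.cos θ : ℝ) : ℂ) := by rw [hφc1]
      have heq' : -Complex.I * (((a * Real.cos θ - b * Real.sin θ : ℝ) : ℂ) *
            (fderiv ℝ (⇑u) (φ θ)) e1
          - ((a * Real.sin θ + b * Real.cos θ : ℝ) : ℂ) * (fderiv ℝ (⇑u) (φ θ)) e0)
          = (c : ℂ) * u (φ θ) := by
        rw [← hy1, ← hy2]
        exact heq
      have hI : Complex.I * Complex.I = -1 := Complex.I_mul_I
      push_cast at heq' ⊢
      linear_combination Complex.I * heq' +
        ((↑a * Complex.cos ↑θ - ↑b * Complex.sin ↑θ) * (fderiv ℝ (⇑u) (φ θ)) e1 -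
          (↑a * Complex.sin ↑θ + ↑b * Complex.cos ↑θ) * (fderiv ℝ (⇑u) (φ θ)) e0) * hI
    rw [hval] at hcomp
    exact hcomp
  -- the auxiliary function g θ = exp(-(I c θ)) * u (φ θ) is constant
  set g : ℝ → ℂ := fun θ => Complex.exp (-(Complex.I * c * θ)) * u (φ θ) with hg
  have hg' : ∀ θ : ℝ, HasDerivAt g 0 θ := by
    intro θ
    have hlin : HasDerivAt (fun θ : ℝ => -(Complex.I * c * θ)) (-(Complex.I * c)) θ := by
      have := (Complex.ofRealCLM.hasDerivAt (x := θ)).const_mul (-(Complex.I * c))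
      simpa [mul_comm, mul_assoc, neg_mul] using this
    have hexp := hlin.cexp
    have := hexp.mul (key θ)
    convert this using 1
    · rfl
    · rfl
    ring
  have hconst : ∀ x y : ℝ, g x = g y :=
    is_const_of_deriv_eq_zero (fun θ => (hg' θ).differentiableAt)
      (fun θ => (hg' θ).deriv)
  have hgg := hconst (2 * π) 0
  simp only [hg, hφ0, hφ2π, Complex.ofReal_zero, mul_zero, neg_zero, Complex.exp_zero,
    one_mul] at hgg
  have hexp1 : Complex.exp (-(Complex.I * c * (2 * π : ℝ))) = 1 :=
    mul_right_cancel₀ hx₀ (by rw [hgg, one_mul])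
  rw [Complex.exp_eq_one_iff] at hexp1
  obtain ⟨n, hn⟩ := hexp1
  refine ⟨-n, ?_⟩
  have hπ : ((π : ℝ) : ℂ) ≠ 0 := by exact_mod_cast Real.pi_ne_zero
  have hne : (2 * ((π : ℝ) : ℂ) * Complex.I) ≠ 0 := by
    simp [hπ, Complex.I_ne_zero]
  have hcc : (c : ℂ) * (2 * ((π : ℝ) : ℂ) * Complex.I)
      = ((-n : ℤ) : ℂ) * (2 * ((π : ℝ) : ℂ) * Complex.I) := by
    push_cast at hn ⊢
    linear_combination -hn
  have hc2 : (c : ℂ) = ((-n : ℤ) : ℂ) := mul_right_cancel₀ hne hcc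
  exact_mod_cast hc2

/-- Regularity of constrained minimizers: if `∫|u|² = m`, `L(u) = l`, and either
`l/m ∉ ℤ`, or `l/m = n ∈ ℤ` but `u` is not an eigenfunction of `L_z` with
eigenvalue `n`, then `u` and `L_z u` are linearly independent over `ℝ`. -/
theorem constraint_regularity (d : ℕ) (hd : d = 2 ∨ d = 3) (m l : ℝ)
    (hm : 0 < m) (hl : 0 < l)
    (u : SchwartzMap (EuclideanSpace ℝ (Fin d)) ℂ)
    (hmass : (∫ x, ‖u x‖ ^ 2) = m) (hang : angMom (⇑u) = (l : ℂ))
    (hcase : (¬ ∃ n : ℤ, l / m = (n : ℝ)) ∨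
      (∃ n : ℤ, l / m = (n : ℝ) ∧
        ¬ ∀ x : EuclideanSpace ℝ (Fin d), Lz (⇑u) x = ((n : ℝ) : ℂ) * u x)) :
    ∀ l₁ l₂ : ℝ,
      (∀ x : EuclideanSpace ℝ (Fin d), (l₁ : ℂ) * u x + (l₂ : ℂ) * Lz (⇑u) x = 0) →
      l₁ = 0 ∧ l₂ = 0 := by
  intro l₁ l₂ hlin
  have hd1 : 1 < d := by rcases hd with h | h <;> omega
  -- u is nonzero somewhere
  have hex : ∃ x, u x ≠ 0 := by
    by_contra h
    push_neg at h
    rw [show (∫ x, ‖u x‖ ^ 2) = 0 by simp [h]] at hmass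
    linarith
  obtain ⟨x₀, hx₀⟩ := hex
  by_cases hl₂ : l₂ = 0
  · subst hl₂
    have h0 := hlin x₀
    simp only [Complex.ofReal_zero, zero_mul, add_zero] at h0
    have : (l₁ : ℂ) = 0 := by
      rcases mul_eq_zero.mp h0 with h | h
      · exact h
      · exact absurd h hx₀
    exact ⟨by exact_mod_cast this, rfl⟩
  · exfalso
    have hl₂' : (l₂ : ℂ) ≠ 0 := by exact_mod_cast hl₂
    set c : ℝ := -l₁ / l₂ with hc
    have heig : ∀ x, Lz (⇑u) x = ((c : ℝ) : ℂ) * u x := by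
      intro x
      have h0 := hlin x
      rw [hc]
      push_cast
      rw [div_mul_eq_mul_div, eq_div_iff hl₂']
      linear_combination h0
    -- angular momentum computation : angMom u = c * m
    have hAng : angMom (⇑u) = ((c * m : ℝ) : ℂ) := by
      rw [angMom]
      have hInt : ∀ x, Lz (⇑u) x * (starRingEnd ℂ) (u x)
          = ((c : ℝ) : ℂ) * ((‖u x‖ ^ 2 : ℝ) : ℂ) := by
        intro x
        rw [heig x, mul_assoc, Complex.mul_conj]
        congr 1
        rw [Complex.normSq_eq_norm_sq]
      rw [show (fun x => Lz (⇑u) x * (starRingEnd ℂ) (u x))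
          = fun x => ((c : ℝ) : ℂ) * ((‖u x‖ ^ 2 : ℝ) : ℂ) from funext hInt]
      rw [integral_const_mul]
      rw [show (∫ a, ((‖u a‖ ^ 2 : ℝ) : ℂ)) = ((∫ a, ‖u a‖ ^ 2 : ℝ) : ℂ) from integral_ofReal,
        hmass]
      norm_cast
    have hcm : c * m = l := by
      rw [hAng] at hang
      exact_mod_cast hang
    have hclm : c = l / m := by field_simp [hcm]; exact hcm
    rcases hcase with hna | ⟨n, hn, hne⟩
    · -- case (a): l/m is not an integer, but eigenvalue must be an integer
      obtain ⟨n, hnn⟩ := eigen_is_int hd1 u c heig x₀ hx₀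
      exact hna ⟨n, by rw [← hclm]; exact hnn⟩
    · -- case (b): l/m = n but u is not an eigenfunction with eigenvalue n
      apply hne
      intro x
      rw [← hn, ← hclm]
      exact heig x

end
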